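/- The group B_2(C_3) is isomorphic to Z, with generator [1,1]; moreover [1,2] = 0 and [0,1] = [1,1] = -[2,2] = -[0,2] in B_2(C_3). -/

import Mathlib

open FreeAbelianGroup

/-- A multiset of characters generates the character group. -/
def Adm {A : Type} [AddCommGroup A] (s : Multiset A) : Prop :=
  AddSubgroup.closure {x | x ∈ s} = ⊤

/-- Admissible symbols: multisets of `n` characters generating `A`. -/
def Symb (A : Type) [AddCommGroup A] (n : ℕ) : Type :=
  {s : Multiset A // Multiset.card s = n ∧ Adm s}

/-- The blow-up relations (B₂). -/
def blowupRels (A : Type) [AddCommGroup A] (n : ℕ) :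
    Set (FreeAbelianGroup (Symb A n)) :=
  {x | ∃ (a b : A) (t : Multiset A)
      (h : Multiset.card (a ::ₘ b ::ₘ t) = n ∧ Adm (a ::ₘ b ::ₘ t))
      (h1 : Multiset.card (a ::ₘ (b - a) ::ₘ t) = n ∧ Adm (a ::ₘ (b - a) ::ₘ t))
      (h2 : Multiset.card ((a - b) ::ₘ b ::ₘ t) = n ∧ Adm ((a - b) ::ₘ b ::ₘ t)),
      a ≠ b ∧
      x = of (⟨a ::ₘ b ::ₘ t, h⟩ : Symb A n) - of ⟨a ::ₘ (b - a) ::ₘ t, h1⟩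
            - of ⟨(a - b) ::ₘ b ::ₘ t, h2⟩} ∪
  {x | ∃ (a : A) (t : Multiset A)
      (h : Multiset.card (a ::ₘ a ::ₘ t) = n ∧ Adm (a ::ₘ a ::ₘ t))
      (h0 : Multiset.card ((0 : A) ::ₘ a ::ₘ t) = n ∧ Adm ((0 : A) ::ₘ a ::ₘ t)),
      x = of (⟨a ::ₘ a ::ₘ t, h⟩ : Symb A n) - of ⟨(0 : A) ::ₘ a ::ₘ t, h0⟩}

/-- The group of equivariant birational types `𝓑ₙ(G)`, for `A = G^∨`. -/
def B (A : Type) [AddCommGroup A] (n : ℕ) : Type :=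
  FreeAbelianGroup (Symb A n) ⧸ AddSubgroup.closure (blowupRels A n)

instance (A : Type) [AddCommGroup A] (n : ℕ) : AddCommGroup (B A n) := by
  unfold B; infer_instance

/-- The class of a symbol in `𝓑ₙ(G)`. -/
def symb {A : Type} [AddCommGroup A] {n : ℕ} (s : Multiset A)
    (h : Multiset.card s = n ∧ Adm s) : B A n :=
  QuotientAddGroup.mk (of (⟨s, h⟩ : Symb A n))

lemma adm_of_unit {N : ℕ} [NeZero N] {s : Multiset (ZMod N)} {u : ZMod N}
    (hu : u ∈ s) (h : IsUnit u) : Adm s := by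
  rw [Adm, AddSubgroup.eq_top_iff']
  intro x
  have hu' : u ∈ AddSubgroup.closure {y | y ∈ s} := AddSubgroup.subset_closure hu
  obtain ⟨v, hv⟩ := h.exists_left_inv
  have hx : x = (x * v).val • u := by
    rw [nsmul_eq_mul, ZMod.natCast_val, ZMod.cast_id, mul_assoc, hv, mul_one]
  rw [hx]
  exact AddSubgroup.nsmul_mem _ hu' _

lemma admU {N : ℕ} [NeZero N] {s : Multiset (ZMod N)} {u v : ZMod N}
    (hu : u ∈ s) (huv : u * v = 1) : Adm s :=
  adm_of_unit hu ⟨⟨u, v, huv, by rw [mul_comm]; exact huv⟩, rfl⟩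

/-- The symbol `[1,1]` in `B₂(C₃)`. -/
def c3_11 : B (ZMod 3) 2 :=
  symb {1, 1} ⟨by decide, admU (u := 1) (v := 1) (by decide) (by decide)⟩

/-- The symbol `[1,2]` in `B₂(C₃)`. -/
def c3_12 : B (ZMod 3) 2 :=
  symb {1, 2} ⟨by decide, admU (u := 1) (v := 1) (by decide) (by decide)⟩

/-- The symbol `[0,1]` in `B₂(C₃)`. -/
def c3_01 : B (ZMod 3) 2 :=
  symb {0, 1} ⟨by decide, admU (u := 1) (v := 1) (by decide) (by decide)⟩

/-- The symbol `[2,2]` in `B₂(C₃)`. -/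
def c3_22 : B (ZMod 3) 2 :=
  symb {2, 2} ⟨by decide, admU (u := 2) (v := 2) (by decide) (by decide)⟩

/-- The symbol `[0,2]` in `B₂(C₃)`. -/
def c3_02 : B (ZMod 3) 2 :=
  symb {0, 2} ⟨by decide, admU (u := 2) (v := 2) (by decide) (by decide)⟩

/-! ### Auxiliary development -/

/-- The weight function on multisets. -/
def gwt (s : Multiset (ZMod 3)) : ℤ :=
  if s = {1, 1} ∨ s = {0, 1} then 1 else if s = {2, 2} ∨ s = {0, 2} then -1 else 0

/-- The homomorphism from the free abelian group to ℤ. -/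
def phi0 : FreeAbelianGroup (Symb (ZMod 3) 2) →+ ℤ :=
  FreeAbelianGroup.lift (fun s => gwt s.1)

lemma phi0_of (s : Symb (ZMod 3) 2) : phi0 (of s) = gwt s.1 :=
  FreeAbelianGroup.lift_apply_of _ _

lemma card_two_t {a b : ZMod 3} {t : Multiset (ZMod 3)}
    (h : Multiset.card (a ::ₘ b ::ₘ t) = 2) : t = 0 := by
  have h2 : Multiset.card t = 0 := by
    rw [Multiset.card_cons, Multiset.card_cons] at h; omega
  exact Multiset.card_eq_zero.mp h2

lemma gwt_rel1 : ∀ a b : ZMod 3, a ≠ b →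
    gwt (a ::ₘ b ::ₘ 0) - gwt (a ::ₘ (b - a) ::ₘ 0) - gwt ((a - b) ::ₘ b ::ₘ 0) = 0 := by
  decide

lemma gwt_rel2 : ∀ a : ZMod 3,
    gwt (a ::ₘ a ::ₘ 0) - gwt ((0 : ZMod 3) ::ₘ a ::ₘ 0) = 0 := by
  decide

lemma phi0_rels : ∀ x ∈ blowupRels (ZMod 3) 2, x ∈ phi0.ker := by
  rintro x (⟨a, b, t, h, h1, h2, hne, hx⟩ | ⟨a, t, h, h0, hx⟩)
  · have ht : t = 0 := card_two_t h.1
    subst ht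
    subst hx
    erw [AddMonoidHom.mem_ker, map_sub, map_sub, phi0_of, phi0_of, phi0_of]
    exact gwt_rel1 a b hne
  · have ht : t = 0 := card_two_t h.1
    subst ht
    subst hx
    erw [AddMonoidHom.mem_ker, map_sub, phi0_of, phi0_of]
    exact gwt_rel2 a

/-- The descended homomorphism `B₂(C₃) →+ ℤ`. -/
def phiBar : B (ZMod 3) 2 →+ ℤ :=
  QuotientAddGroup.lift _ phi0 (fun x hx => by
    have : AddSubgroup.closure (blowupRels (ZMod 3) 2) ≤ phi0.ker :=
      (AddSubgroup.closure_le _).mpr phi0_rels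
    exact this hx)

lemma phiBar_symb (s : Multiset (ZMod 3)) (h : Multiset.card s = 2 ∧ Adm s) :
    phiBar (symb s h) = gwt s := phi0_of _

lemma symb_congr {s t : Multiset (ZMod 3)} (hs : Multiset.card s = 2 ∧ Adm s)
    (ht : Multiset.card t = 2 ∧ Adm t) (h : s = t) : symb s hs = symb t ht := by
  subst h; rfl

lemma rel1 (a b : ZMod 3)
    (h : Multiset.card (a ::ₘ b ::ₘ 0) = 2 ∧ Adm (a ::ₘ b ::ₘ 0))
    (h1 : Multiset.card (a ::ₘ (b - a) ::ₘ 0) = 2 ∧ Adm (a ::ₘ (b - a) ::ₘ 0))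
    (h2 : Multiset.card ((a - b) ::ₘ b ::ₘ 0) = 2 ∧ Adm ((a - b) ::ₘ b ::ₘ 0))
    (hne : a ≠ b) :
    symb (a ::ₘ b ::ₘ 0) h = symb (a ::ₘ (b - a) ::ₘ 0) h1 + symb ((a - b) ::ₘ b ::ₘ 0) h2 := by
  unfold symb
  erw [← QuotientAddGroup.mk_add, QuotientAddGroup.eq]
  have hm : of (⟨a ::ₘ b ::ₘ 0, h⟩ : Symb (ZMod 3) 2) - of ⟨a ::ₘ (b - a) ::ₘ 0, h1⟩
      - of ⟨(a - b) ::ₘ b ::ₘ 0, h2⟩ ∈ AddSubgroup.closure (blowupRels (ZMod 3) 2) :=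
    AddSubgroup.subset_closure (Or.inl ⟨a, b, 0, h, h1, h2, hne, rfl⟩)
  have := AddSubgroup.neg_mem _ hm
  convert this using 1
  abel

lemma rel2 (a : ZMod 3)
    (h : Multiset.card (a ::ₘ a ::ₘ 0) = 2 ∧ Adm (a ::ₘ a ::ₘ 0))
    (h0 : Multiset.card ((0 : ZMod 3) ::ₘ a ::ₘ 0) = 2 ∧ Adm ((0 : ZMod 3) ::ₘ a ::ₘ 0)) :
    symb (a ::ₘ a ::ₘ 0) h = symb ((0 : ZMod 3) ::ₘ a ::ₘ 0) h0 := by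
  unfold symb
  erw [QuotientAddGroup.eq]
  have hm : of (⟨a ::ₘ a ::ₘ 0, h⟩ : Symb (ZMod 3) 2) - of ⟨(0 : ZMod 3) ::ₘ a ::ₘ 0, h0⟩
      ∈ AddSubgroup.closure (blowupRels (ZMod 3) 2) :=
    AddSubgroup.subset_closure (Or.inr ⟨a, 0, h, h0, rfl⟩)
  have := AddSubgroup.neg_mem _ hm
  convert this using 1
  abel

lemma not_adm_00 : ¬ Adm ((0 : ZMod 3) ::ₘ (0 : ZMod 3) ::ₘ 0) := by
  intro h
  have h1 : (1 : ZMod 3) ∈ AddSubgroup.closure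
      {x | x ∈ (0 : ZMod 3) ::ₘ (0 : ZMod 3) ::ₘ 0} := by
    rw [h]; trivial
  have hle : AddSubgroup.closure {x | x ∈ (0 : ZMod 3) ::ₘ (0 : ZMod 3) ::ₘ 0}
      ≤ (⊥ : AddSubgroup (ZMod 3)) := by
    rw [AddSubgroup.closure_le]
    intro x hx
    simp only [Set.mem_setOf_eq, Multiset.mem_cons, Multiset.notMem_zero, or_false] at hx
    simp [hx.elim id id]
  exact one_ne_zero (AddSubgroup.mem_bot.mp (hle h1))


lemma adm1 {s : Multiset (ZMod 3)} (h : (1 : ZMod 3) ∈ s) : Adm s :=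
  admU h (v := 1) (by decide)

lemma adm2 {s : Multiset (ZMod 3)} (h : (2 : ZMod 3) ∈ s) : Adm s :=
  admU h (v := 2) (by decide)

lemma c3_12_zero : c3_12 = 0 := by
  have h01 : Multiset.card ((0:ZMod 3) ::ₘ 1 ::ₘ 0) = 2 ∧ Adm ((0:ZMod 3) ::ₘ 1 ::ₘ 0) :=
    ⟨by decide, adm1 (by decide)⟩
  have h21 : Multiset.card ((2:ZMod 3) ::ₘ 1 ::ₘ 0) = 2 ∧ Adm ((2:ZMod 3) ::ₘ 1 ::ₘ 0) :=
    ⟨by decide, adm1 (by decide)⟩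
  have h1' : Multiset.card ((0:ZMod 3) ::ₘ ((1:ZMod 3) - 0) ::ₘ 0) = 2
      ∧ Adm ((0:ZMod 3) ::ₘ ((1:ZMod 3) - 0) ::ₘ 0) := ⟨by decide, adm1 (by decide)⟩
  have h2' : Multiset.card (((0:ZMod 3) - 1) ::ₘ 1 ::ₘ 0) = 2
      ∧ Adm (((0:ZMod 3) - 1) ::ₘ 1 ::ₘ 0) := ⟨by decide, adm1 (by decide)⟩
  have key := rel1 0 1 h01 h1' h2' (by decide)
  rw [symb_congr h1' h01 (by decide), symb_congr h2' h21 (by decide)] at key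
  have hz : symb ((2:ZMod 3) ::ₘ 1 ::ₘ 0) h21 = 0 := (left_eq_add.mp key)
  have : c3_12 = symb ((2:ZMod 3) ::ₘ 1 ::ₘ 0) h21 := symb_congr _ _ (by decide)
  rw [this, hz]

lemma c3_01_eq : c3_01 = c3_11 := by
  have h11 : Multiset.card ((1:ZMod 3) ::ₘ 1 ::ₘ 0) = 2 ∧ Adm ((1:ZMod 3) ::ₘ 1 ::ₘ 0) :=
    ⟨by decide, adm1 (by decide)⟩
  have h01 : Multiset.card ((0:ZMod 3) ::ₘ 1 ::ₘ 0) = 2 ∧ Adm ((0:ZMod 3) ::ₘ 1 ::ₘ 0) :=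
    ⟨by decide, adm1 (by decide)⟩
  have key := rel2 1 h11 h01
  have e1 : c3_11 = symb ((1:ZMod 3) ::ₘ 1 ::ₘ 0) h11 := symb_congr _ _ (by decide)
  have e2 : c3_01 = symb ((0:ZMod 3) ::ₘ 1 ::ₘ 0) h01 := symb_congr _ _ (by decide)
  rw [e1, e2, key]

lemma c3_22_eq : c3_22 = c3_02 := by
  have h22 : Multiset.card ((2:ZMod 3) ::ₘ 2 ::ₘ 0) = 2 ∧ Adm ((2:ZMod 3) ::ₘ 2 ::ₘ 0) :=
    ⟨by decide, adm2 (by decide)⟩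
  have h02 : Multiset.card ((0:ZMod 3) ::ₘ 2 ::ₘ 0) = 2 ∧ Adm ((0:ZMod 3) ::ₘ 2 ::ₘ 0) :=
    ⟨by decide, adm2 (by decide)⟩
  have key := rel2 2 h22 h02
  have e1 : c3_22 = symb ((2:ZMod 3) ::ₘ 2 ::ₘ 0) h22 := symb_congr _ _ (by decide)
  have e2 : c3_02 = symb ((0:ZMod 3) ::ₘ 2 ::ₘ 0) h02 := symb_congr _ _ (by decide)
  rw [e1, e2, key]

lemma c3_11_neg : c3_11 = -c3_22 := by
  have h12 : Multiset.card ((1:ZMod 3) ::ₘ 2 ::ₘ 0) = 2 ∧ Adm ((1:ZMod 3) ::ₘ 2 ::ₘ 0) :=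
    ⟨by decide, adm1 (by decide)⟩
  have h11 : Multiset.card ((1:ZMod 3) ::ₘ ((2:ZMod 3) - 1) ::ₘ 0) = 2
      ∧ Adm ((1:ZMod 3) ::ₘ ((2:ZMod 3) - 1) ::ₘ 0) := ⟨by decide, adm1 (by decide)⟩
  have h22 : Multiset.card (((1:ZMod 3) - 2) ::ₘ 2 ::ₘ 0) = 2
      ∧ Adm (((1:ZMod 3) - 2) ::ₘ 2 ::ₘ 0) := ⟨by decide, adm2 (by decide)⟩
  have key := rel1 1 2 h12 h11 h22 (by decide)
  have e0 : c3_12 = symb ((1:ZMod 3) ::ₘ 2 ::ₘ 0) h12 := symb_congr _ _ (by decide)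
  have e1 : c3_11 = symb ((1:ZMod 3) ::ₘ ((2:ZMod 3) - 1) ::ₘ 0) h11 :=
    symb_congr _ _ (by decide)
  have e2 : c3_22 = symb (((1:ZMod 3) - 2) ::ₘ 2 ::ₘ 0) h22 := symb_congr _ _ (by decide)
  rw [← e0, ← e1, ← e2, c3_12_zero] at key
  linear_combination (norm := abel) -key

lemma zmod3_cases : ∀ a : ZMod 3, a = 0 ∨ a = 1 ∨ a = 2 := by decide

lemma gwt_smul (s : Symb (ZMod 3) 2) :
    gwt s.1 • c3_11 = (QuotientAddGroup.mk (of s) : B (ZMod 3) 2) := by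
  obtain ⟨m, hm⟩ := s
  obtain ⟨a, b, rfl⟩ := Multiset.card_eq_two.mp hm.1
  show gwt {a, b} • c3_11 = symb {a, b} hm
  have ha : a = 0 ∨ a = 1 ∨ a = 2 := zmod3_cases a
  have hb : b = 0 ∨ b = 1 ∨ b = 2 := zmod3_cases b
  rcases ha with rfl | rfl | rfl <;> rcases hb with rfl | rfl | rfl
  · exact absurd hm.2 not_adm_00
  · rw [show symb {(0:ZMod 3), 1} hm = c3_01 from symb_congr _ _ (by decide), c3_01_eq,
      show gwt {(0:ZMod 3), 1} = 1 from by decide, one_smul]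
  · rw [show symb {(0:ZMod 3), 2} hm = c3_02 from symb_congr _ _ (by decide), ← c3_22_eq,
      ← neg_neg c3_22, ← c3_11_neg,
      show gwt {(0:ZMod 3), 2} = -1 from by decide, neg_smul, one_smul]
  · rw [show symb {(1:ZMod 3), 0} hm = c3_01 from symb_congr _ _ (by decide), c3_01_eq,
      show gwt {(1:ZMod 3), 0} = 1 from by decide, one_smul]
  · rw [show symb {(1:ZMod 3), 1} hm = c3_11 from symb_congr _ _ (by decide),
      show gwt {(1:ZMod 3), 1} = 1 from by decide, one_smul]
  · rw [show symb {(1:ZMod 3), 2} hm = c3_12 from symb_congr _ _ (by decide), c3_12_zero,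
      show gwt {(1:ZMod 3), 2} = 0 from by decide, zero_smul]
  · rw [show symb {(2:ZMod 3), 0} hm = c3_02 from symb_congr _ _ (by decide), ← c3_22_eq,
      ← neg_neg c3_22, ← c3_11_neg,
      show gwt {(2:ZMod 3), 0} = -1 from by decide, neg_smul, one_smul]
  · rw [show symb {(2:ZMod 3), 1} hm = c3_12 from symb_congr _ _ (by decide), c3_12_zero,
      show gwt {(2:ZMod 3), 1} = 0 from by decide, zero_smul]
  · rw [show symb {(2:ZMod 3), 2} hm = c3_22 from symb_congr _ _ (by decide),
      ← neg_neg c3_22, ← c3_11_neg,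
      show gwt {(2:ZMod 3), 2} = -1 from by decide, neg_smul, one_smul]

lemma phiBar_c3_11 : phiBar c3_11 = 1 := by
  have := phiBar_symb {1, 1} ⟨by decide, adm1 (by decide)⟩
  rw [show c3_11 = symb {(1:ZMod 3), 1} ⟨by decide, adm1 (by decide)⟩ from
    symb_congr _ _ rfl, this]
  decide

/-- The isomorphism `B₂(C₃) ≃+ ℤ`. -/
def phiEquiv : B (ZMod 3) 2 ≃+ ℤ where
  toFun := phiBar
  invFun := fun n => n • c3_11
  left_inv := by
    intro x
    induction x using QuotientAddGroup.induction_on with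
    | H z =>
      induction z using FreeAbelianGroup.induction_on with
      | zero => dsimp only; exact (congrArg (· • c3_11) (map_zero phiBar)).trans (zero_smul _ _)
      | of s =>
        dsimp only
        rw [show phiBar (QuotientAddGroup.mk (of s)) = gwt s.1 from phi0_of s]
        exact gwt_smul s
      | neg s ih =>
        dsimp only at ih ⊢
        erw [show (QuotientAddGroup.mk (-of s) : B (ZMod 3) 2)
            = -QuotientAddGroup.mk (of s) from rfl, map_neg, neg_smul, ih]
        rfl
      | add z w ihz ihw =>
        dsimp only at ihz ihw ⊢
        erw [show (QuotientAddGroup.mk (z + w) : B (ZMod 3) 2)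
            = QuotientAddGroup.mk z + QuotientAddGroup.mk w from rfl,
          map_add, add_smul, ihz, ihw]
        rfl
  right_inv := fun n => by rw [map_zsmul, phiBar_c3_11, smul_eq_mul, mul_one]
  map_add' := phiBar.map_add

/-- `B₂(C₃) ≅ ℤ` with generator `[1,1]`; moreover `[1,2] = 0`
and `[0,1] = [1,1] = -[2,2] = -[0,2]`. -/
theorem B2_C3_int :
    (∃ φ : B (ZMod 3) 2 ≃+ ℤ, φ c3_11 = 1) ∧
    c3_12 = 0 ∧ c3_01 = c3_11 ∧ c3_11 = -c3_22 ∧ c3_22 = c3_02 :=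
  ⟨⟨phiEquiv, phiBar_c3_11⟩, c3_12_zero, c3_01_eq, c3_11_neg, c3_22_eq⟩
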